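/- arXiv:2005.11301 — 5 statements merged into one kernel-verified Lean document; each statement's English description precedes it below -/
import Mathlib

section
/- For the tridiagonal antihermitian N×N matrix k with superdiagonal c_1,...,c_{N-1}, the coefficient of x^{N-2k} in det(x·I - k) equals ∑ |c_{j_1}|²···|c_{j_k}|², summed over indices 1 ≤ j_1 < j_2 < ... < j_k ≤ N-1 with j_{i+1} - j_i ≥ 2 for every i; all coefficients of x^m with m not congruent to N mod 2 vanish. -/
open Matrix Polynomial Finset

/-- The `N×N` tridiagonal antihermitian matrix with superdiagonal `c₁,…,c_{N-1}`
(1-indexed) and subdiagonal `-c̄₁,…,-c̄_{N-1}`. -/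
def triK (c : ℕ → ℂ) (n : ℕ) : Matrix (Fin n) (Fin n) ℂ := fun i j =>
  if (i : ℕ) + 1 = (j : ℕ) then c ((i : ℕ) + 1)
  else if (j : ℕ) + 1 = (i : ℕ) then -(starRingEnd ℂ) (c ((j : ℕ) + 1))
  else 0

def spacedSet (S : Finset ℕ) : Prop := ∀ a ∈ S, ∀ b ∈ S, a < b → a + 2 ≤ b

instance : DecidablePred spacedSet := fun S => by unfold spacedSet; infer_instance

noncomputable def w (c : ℕ → ℂ) (S : Finset ℕ) : ℂ :=
  ∏ j ∈ S, ((‖c j‖ ^ 2 : ℝ) : ℂ)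

def fam (n : ℕ) : Finset (Finset ℕ) :=
  (Finset.powerset (Finset.Icc 1 n)).filter spacedSet

noncomputable def ep (c : ℕ → ℂ) (n : ℕ) : Polynomial ℂ :=
  ∑ S ∈ fam (n - 1), C (w c S) * X ^ (n - 2 * S.card)

lemma spaced_bound : ∀ k (S : Finset ℕ) (m : ℕ), S.card = k → spacedSet S →
    S ⊆ Finset.Icc 1 m → 2 * k ≤ m + 1 := by
  intro k
  induction k with
  | zero => intro S m _ _ _; omega
  | succ k ih =>
    intro S m hc hs hsub
    have hne : S.Nonempty := by rw [← Finset.card_pos, hc]; omega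
    set b := S.max' hne with hb
    have hbS : b ∈ S := S.max'_mem hne
    have hbm : b ≤ m := (Finset.mem_Icc.mp (hsub hbS)).2
    have h1b : 1 ≤ b := (Finset.mem_Icc.mp (hsub hbS)).1
    have hsub' : S.erase b ⊆ Finset.Icc 1 (b - 2) := by
      intro a ha
      have haS := Finset.mem_of_mem_erase ha
      have hne' := Finset.ne_of_mem_erase ha
      have hle := S.le_max' a haS
      have h2 := hs a haS b hbS (lt_of_le_of_ne hle hne')
      have h3 := (Finset.mem_Icc.mp (hsub haS)).1
      exact Finset.mem_Icc.mpr ⟨h3, by omega⟩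
    have hs' : spacedSet (S.erase b) := fun a ha a' ha' h =>
      hs a (Finset.mem_of_mem_erase ha) a' (Finset.mem_of_mem_erase ha') h
    have := ih (S.erase b) (b - 2)
      (by rw [Finset.card_erase_of_mem hbS, hc]; rfl) hs' hsub'
    omega

lemma mem_fam_bound {S : Finset ℕ} {m : ℕ} (h : S ∈ fam m) : 2 * S.card ≤ m + 1 := by
  rw [fam, Finset.mem_filter, Finset.mem_powerset] at h
  exact spaced_bound S.card S m rfl h.2 h.1

lemma fam_filter_not_mem (n : ℕ) :
    (fam (n + 1)).filter (fun S => n + 1 ∉ S) = fam n := by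
  ext S
  simp only [fam, Finset.mem_filter, Finset.mem_powerset]
  constructor
  · rintro ⟨⟨hsub, hsp⟩, hnm⟩
    refine ⟨fun a ha => ?_, hsp⟩
    have := Finset.mem_Icc.mp (hsub ha)
    have : a ≠ n + 1 := fun e => hnm (e ▸ ha)
    exact Finset.mem_Icc.mpr ⟨by omega, by omega⟩
  · rintro ⟨hsub, hsp⟩
    have hn : n + 1 ∉ S := fun h => by
      have := Finset.mem_Icc.mp (hsub h); omega
    exact ⟨⟨fun a ha => by
      have := Finset.mem_Icc.mp (hsub ha)
      exact Finset.mem_Icc.mpr ⟨by omega, by omega⟩, hsp⟩, hn⟩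

lemma ep_zero (c : ℕ → ℂ) : ep c 0 = 1 := by
  have : fam 0 = {∅} := by decide
  simp [ep, this, w]

lemma ep_one (c : ℕ → ℂ) : ep c 1 = X := by
  have : fam 0 = {∅} := by decide
  simp [ep, this, w]

lemma ep_rec (c : ℕ → ℂ) (n : ℕ) :
    ep c (n + 2) = X * ep c (n + 1) +
      C ((‖c (n + 1)‖ ^ 2 : ℝ) : ℂ) * ep c n := by
  rw [ep, show n + 2 - 1 = n + 1 from rfl,
    ← Finset.sum_filter_add_sum_filter_not (fam (n + 1)) (fun S => n + 1 ∈ S)]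
  have h2 : ∑ S ∈ (fam (n+1)).filter (fun S => n + 1 ∉ S),
      C (w c S) * X ^ (n + 2 - 2 * S.card) = X * ep c (n + 1) := by
    rw [fam_filter_not_mem, ep, Finset.mul_sum, show n + 1 - 1 = n from rfl]
    refine Finset.sum_congr rfl fun S hS => ?_
    have hb := mem_fam_bound hS
    rw [show n + 2 - 2 * S.card = (n + 1 - 2 * S.card) + 1 by omega, pow_succ]
    ring
  have h1 : ∑ S ∈ (fam (n+1)).filter (fun S => n + 1 ∈ S),
      C (w c S) * X ^ (n + 2 - 2 * S.card) =
      C ((‖c (n + 1)‖ ^ 2 : ℝ) : ℂ) * ep c n := by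
    rw [ep, Finset.mul_sum]
    refine Finset.sum_bij' (fun S _ => S.erase (n + 1))
      (fun T _ => insert (n + 1) T) ?_ ?_ ?_ ?_ ?_
    · intro S hS
      rw [Finset.mem_filter] at hS
      obtain ⟨hmem, hin⟩ := hS
      rw [fam, Finset.mem_filter, Finset.mem_powerset] at hmem
      obtain ⟨hsub, hsp⟩ := hmem
      rw [fam, Finset.mem_filter, Finset.mem_powerset]
      constructor
      · intro a ha
        have haS := Finset.mem_of_mem_erase ha
        have hne := Finset.ne_of_mem_erase ha
        have h1 := Finset.mem_Icc.mp (hsub haS)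
        have h2 := hsp a haS (n + 1) hin (by omega)
        exact Finset.mem_Icc.mpr ⟨by omega, by omega⟩
      · exact fun a ha b hb hab =>
          hsp a (Finset.mem_of_mem_erase ha) b (Finset.mem_of_mem_erase hb) hab
    · intro T hT
      rw [fam, Finset.mem_filter, Finset.mem_powerset] at hT
      obtain ⟨hsub, hsp⟩ := hT
      rw [Finset.mem_filter, fam, Finset.mem_filter, Finset.mem_powerset]
      refine ⟨⟨fun a ha => ?_, ?_⟩, Finset.mem_insert_self _ _⟩
      · rcases Finset.mem_insert.mp ha with h | h
        · exact Finset.mem_Icc.mpr (by omega)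
        · have := Finset.mem_Icc.mp (hsub h)
          exact Finset.mem_Icc.mpr ⟨by omega, by omega⟩
      · intro a ha b hb hab
        rcases Finset.mem_insert.mp ha with h | h <;>
          rcases Finset.mem_insert.mp hb with h' | h'
        · omega
        · have := Finset.mem_Icc.mp (hsub h'); omega
        · have := Finset.mem_Icc.mp (hsub h); omega
        · exact hsp a h b h' hab
    · intro S hS
      rw [Finset.mem_filter] at hS
      exact Finset.insert_erase hS.2
    · intro T hT
      rw [fam, Finset.mem_filter, Finset.mem_powerset] at hT
      have : n + 1 ∉ T := fun h => by
        have := Finset.mem_Icc.mp (hT.1 h); omega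
      exact Finset.erase_insert this
    · intro S hS
      rw [Finset.mem_filter] at hS
      obtain ⟨hmem, hin⟩ := hS
      have hb := mem_fam_bound hmem
      have hcard : S.card = (S.erase (n + 1)).card + 1 := by
        rw [Finset.card_erase_of_mem hin]
        have := Finset.card_pos.mpr ⟨n + 1, hin⟩
        omega
      have hw : w c S = ((‖c (n + 1)‖ ^ 2 : ℝ) : ℂ) * w c (S.erase (n + 1)) := by
        rw [w, w, ← Finset.mul_prod_erase S _ hin]
      rw [hw, _root_.map_mul, hcard]
      rw [show n + 2 - 2 * ((S.erase (n+1)).card + 1) = n - 2 * (S.erase (n+1)).card by omega]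
      ring
  rw [h1, h2, add_comm]

lemma charmatrix_triK_submatrix {n m : ℕ} (c : ℕ → ℂ) (f g : Fin n → Fin m)
    (hf : ∀ i, (f i : ℕ) = i) (hg : ∀ i, (g i : ℕ) = i) :
    (charmatrix (triK c m)).submatrix f g = charmatrix (triK c n) := by
  ext i j
  have hfg : f i = g j ↔ i = j := by
    constructor <;> intro h
    · exact Fin.ext (by rw [← hf i, ← hg j, h])
    · exact Fin.ext (by rw [hf i, hg j, h])
  rw [Matrix.submatrix_apply, charmatrix_apply, charmatrix_apply]
  have hd : (Matrix.diagonal fun _ : Fin m => (X : ℂ[X])) (f i) (g j) =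
      (Matrix.diagonal fun _ : Fin n => (X : ℂ[X])) i j := by
    rcases eq_or_ne i j with e | e
    · rw [show f i = g j from hfg.mpr e, e, Matrix.diagonal_apply_eq,
        Matrix.diagonal_apply_eq]
    · rw [Matrix.diagonal_apply_ne _ (fun h => e (hfg.mp h)),
        Matrix.diagonal_apply_ne _ e]
  rw [hd]
  congr 2
  simp only [triK, hf, hg]

lemma charpoly_triK_zero (c : ℕ → ℂ) : (triK c 0).charpoly = 1 := by
  rw [Matrix.charpoly, Matrix.det_fin_zero]

lemma charpoly_triK_one (c : ℕ → ℂ) : (triK c 1).charpoly = X := by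
  rw [Matrix.charpoly, Matrix.det_fin_one, charmatrix_apply_eq]
  simp [triK]

lemma charpoly_triK_rec (c : ℕ → ℂ) (n : ℕ) :
    (triK c (n + 2)).charpoly = X * (triK c (n + 1)).charpoly +
      C ((‖c (n + 1)‖ ^ 2 : ℝ) : ℂ) * (triK c n).charpoly := by
  set A := charmatrix (triK c (n + 2)) with hA
  rw [Matrix.charpoly, ← hA, Matrix.det_succ_row A (Fin.last (n + 1))]
  rw [Fin.sum_univ_castSucc, Fin.sum_univ_castSucc]
  have hzero : ∀ j : Fin n, A (Fin.last (n + 1)) (Fin.castSucc (Fin.castSucc j)) = 0 := by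
    intro j
    have hj := j.isLt
    rw [hA, charmatrix_apply_ne _ _ _ (by
      intro h
      have := congrArg Fin.val h
      simp at this
      omega)]
    simp only [triK, Fin.val_last, Fin.coe_castSucc]
    rw [if_neg (by omega), if_neg (by omega)]
    simp
  rw [Finset.sum_eq_zero (fun j _ => by rw [hzero j]; ring)]
  -- the j = last term
  have hlastlast : A (Fin.last (n + 1)) (Fin.last (n + 1)) = X := by
    rw [hA, charmatrix_apply_eq]
    simp [triK]
  have hsub1 : (A.submatrix (Fin.last (n + 1)).succAbove
      (Fin.last (n + 1)).succAbove).det = (triK c (n + 1)).charpoly := by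
    rw [Matrix.charpoly]
    congr 1
    rw [hA, Fin.succAbove_last]
    exact charmatrix_triK_submatrix c _ _ (fun i => rfl) (fun i => rfl)
  -- the j = n term
  have hcol : ∀ m : ℕ, ((Fin.castSucc (Fin.last m)).succAbove (Fin.last m) : ℕ) = m + 1 := by
    intro m
    rw [Fin.succAbove_of_le_castSucc _ _ (le_refl _)]
    simp
  have hoff : A (Fin.last (n + 1)) (Fin.castSucc (Fin.last n)) =
      C ((starRingEnd ℂ) (c (n + 1))) := by
    rw [hA, charmatrix_apply_ne _ _ _ (by
      intro h
      have := congrArg Fin.val h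
      simp at this)]
    simp only [triK, Fin.val_last, Fin.coe_castSucc]
    rw [if_neg (by omega)]
    simp
  set B := A.submatrix (Fin.last (n + 1)).succAbove
      (Fin.castSucc (Fin.last n)).succAbove with hB
  have hBdet : B.det = -C (c (n + 1)) * (triK c n).charpoly := by
    rw [Matrix.det_succ_column B (Fin.last n), Fin.sum_univ_castSucc]
    have hBzero : ∀ i : Fin n, B (Fin.castSucc i) (Fin.last n) = 0 := by
      intro i
      have hi := i.isLt
      have hrow : ((Fin.last (n+1)).succAbove (Fin.castSucc i) : ℕ) = i := by
        rw [Fin.succAbove_last]; simp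
      rw [hB, Matrix.submatrix_apply, hA, charmatrix_apply_ne _ _ _ (by
        intro h
        have := congrArg Fin.val h
        rw [hrow, hcol n] at this
        omega)]
      simp only [triK, hrow, hcol n]
      rw [if_neg (by omega), if_neg (by omega)]
      simp
    rw [Finset.sum_eq_zero (fun i _ => by rw [hBzero i]; ring)]
    have hBlast : B (Fin.last n) (Fin.last n) = -C (c (n + 1)) := by
      have hrow : ((Fin.last (n+1)).succAbove (Fin.last n) : ℕ) = n := by
        rw [Fin.succAbove_last]; simp
      rw [hB, Matrix.submatrix_apply, hA, charmatrix_apply_ne _ _ _ (by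
        intro h
        have := congrArg Fin.val h
        rw [hrow, hcol n] at this
        omega)]
      simp only [triK, hrow, hcol n]
      simp
    have hBsub : (B.submatrix (Fin.last n).succAbove (Fin.last n).succAbove).det
        = (triK c n).charpoly := by
      rw [Matrix.charpoly]
      congr 1
      rw [hB, Matrix.submatrix_submatrix, hA]
      refine charmatrix_triK_submatrix c _ _ (fun i => ?_) (fun i => ?_)
      · simp [Function.comp, Fin.succAbove_last]
      · simp only [Function.comp, Fin.succAbove_last]
        rw [Fin.succAbove_castSucc_of_lt _ _ (by
          rw [Fin.lt_def]; exact i.isLt)]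
        simp
    rw [hBlast, hBsub]
    simp only [Fin.val_last]
    rw [show ((-1 : ℂ[X]) ^ (n + n)) = 1 by rw [← two_mul, pow_mul]; simp]
    ring
  rw [hlastlast, hsub1, hoff, hBdet]
  simp only [Fin.val_last, Fin.coe_castSucc]
  rw [show ((-1 : ℂ[X]) ^ (n + 1 + (n + 1))) = 1 by
      rw [show n + 1 + (n + 1) = 2 * (n + 1) by ring, pow_mul]; simp,
    show ((-1 : ℂ[X]) ^ (n + 1 + n)) = -1 by
      rw [show n + 1 + n = 2 * n + 1 by ring, pow_succ, pow_mul]; simp]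
  have hC : (C ((starRingEnd ℂ) (c (n + 1))) : ℂ[X]) * C (c (n + 1)) =
      C ((‖c (n + 1)‖ ^ 2 : ℝ) : ℂ) := by
    rw [← C_mul, mul_comm, Complex.mul_conj, Complex.normSq_eq_norm_sq]
  linear_combination (triK c n).charpoly * hC

lemma charpoly_triK_eq_ep (c : ℕ → ℂ) : ∀ n, (triK c n).charpoly = ep c n := by
  intro n
  induction n using Nat.strong_induction_on with
  | _ n ih =>
    match n with
    | 0 => rw [charpoly_triK_zero, ep_zero]
    | 1 => rw [charpoly_triK_one, ep_one]
    | (m + 2) =>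
      rw [charpoly_triK_rec, ep_rec, ih (m + 1) (by omega), ih m (by omega)]

lemma ep_coeff (c : ℕ → ℂ) (n k : ℕ) (h : 2 * k ≤ n) :
    (ep c n).coeff (n - 2 * k) =
      ∑ S ∈ (Finset.powersetCard k (Finset.Icc 1 (n - 1))).filter spacedSet, w c S := by
  rw [ep, Polynomial.finset_sum_coeff]
  simp only [Polynomial.coeff_C_mul, Polynomial.coeff_X_pow, mul_ite, mul_one, mul_zero]
  rw [← Finset.sum_filter]
  congr 1
  ext S
  simp only [Finset.mem_filter, fam, Finset.mem_powerset, Finset.mem_powersetCard]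
  constructor
  · rintro ⟨⟨hsub, hsp⟩, he⟩
    have hb := spaced_bound S.card S (n - 1) rfl hsp hsub
    exact ⟨⟨hsub, by omega⟩, hsp⟩
  · rintro ⟨⟨hsub, hcard⟩, hsp⟩
    exact ⟨⟨hsub, hsp⟩, by omega⟩

lemma ep_coeff_ne (c : ℕ → ℂ) (n m : ℕ) (h : m % 2 ≠ n % 2) :
    (ep c n).coeff m = 0 := by
  rw [ep, Polynomial.finset_sum_coeff]
  refine Finset.sum_eq_zero fun S hS => ?_
  have hb := mem_fam_bound hS
  rw [Polynomial.coeff_C_mul, Polynomial.coeff_X_pow, if_neg (by omega), mul_zero]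

/-- The coefficient of `x^{N-2k}` in `det(x·I - k)` is
`∑ |c_{j₁}|²···|c_{j_k}|²` over `1 ≤ j₁ ≪ j₂ ≪ … ≪ j_k ≤ N-1`
(where `j ≪ j'` means `j' - j ≥ 2`), and the coefficients of `x^m`
with `m ≢ N (mod 2)` vanish. -/
theorem charpoly_triK_coeffs (c : ℕ → ℂ) (N : ℕ) :
    (∀ k : ℕ, 2 * k ≤ N →
      ((triK c N).charpoly).coeff (N - 2 * k) =
        ∑ S ∈ (Finset.powersetCard k (Finset.Icc 1 (N - 1))).filter
            (fun S => ∀ a ∈ S, ∀ b ∈ S, a < b → a + 2 ≤ b),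
          ∏ j ∈ S, ((‖c j‖ ^ 2 : ℝ) : ℂ)) ∧
    (∀ m : ℕ, m % 2 ≠ N % 2 → ((triK c N).charpoly).coeff m = 0) := by
  rw [charpoly_triK_eq_ep]
  exact ⟨fun k hk => ep_coeff c N k hk, fun m hm => ep_coeff_ne c N m hm⟩
end

section
/- For h' = diag(ih_1,...,ih_N) a traceless diagonal antihermitian matrix and k the tridiagonal antihermitian matrix with superdiagonal c_j, one has Tr([h',k]·[h',k]) = -2∑_{j=1}^{N-1} (h_j - h_{j+1})² |c_j|². -/
open Matrix Finset

lemma double_sum_tridiag (N : ℕ) (f : ℕ → ℕ → ℂ)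
    (h0 : ∀ a b, a + 1 ≠ b → b + 1 ≠ a → f a b = 0) :
    ∑ a ∈ Finset.range N, ∑ b ∈ Finset.range N, f a b
      = ∑ a ∈ Finset.range (N - 1), (f a (a+1) + f (a+1) a) := by
  induction N with
  | zero => simp
  | succ n ih =>
    rw [Finset.sum_range_succ]
    have hrow : ∀ a, ∑ b ∈ Finset.range (n+1), f a b
        = ∑ b ∈ Finset.range n, f a b + f a n := fun a => Finset.sum_range_succ _ _
    simp_rw [hrow]
    rw [Finset.sum_add_distrib, ih]
    cases n with
    | zero => simp [h0 0 0 (by omega) (by omega)]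
    | succ m =>
      rw [Finset.sum_range_succ (fun a => f a (m+1))]
      have h1 : ∑ a ∈ Finset.range m, f a (m+1) = 0 :=
        Finset.sum_eq_zero fun a (ha : a ∈ Finset.range m) => h0 a (m+1) (by have := Finset.mem_range.mp ha; omega) (by have := Finset.mem_range.mp ha; omega)
      have h2 : ∑ b ∈ Finset.range (m+1), f (m+1) b
          = f (m+1) m := by
        rw [Finset.sum_range_succ]
        have : ∑ b ∈ Finset.range m, f (m+1) b = 0 :=
          Finset.sum_eq_zero fun b (hb : b ∈ Finset.range m) => h0 (m+1) b (by have := Finset.mem_range.mp hb; omega) (by have := Finset.mem_range.mp hb; omega)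
        cases m with
        | zero => simp
        | succ p =>
          rw [Finset.sum_range_succ] at this ⊢
          have hz : f (p+2) (p+1+1) = 0 := h0 _ _ (by omega) (by omega)
          simp_all
      have h3 : ∑ x ∈ Finset.range m, f (m+1) x = 0 :=
        Finset.sum_eq_zero fun b (hb : b ∈ Finset.range m) => h0 (m+1) b
          (by have := Finset.mem_range.mp hb; omega) (by have := Finset.mem_range.mp hb; omega)
      simp only [Nat.add_sub_cancel, h1, h3, Finset.sum_range_succ, h0 (m+1) (m+1) (by omega) (by omega)]
      ring


/-- For `h' = diag(ih₁,…,ih_N)` traceless and `k` tridiagonal antihermitian,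
`Tr([h',k]·[h',k]) = -2 ∑_{j=1}^{N-1} (h_j - h_{j+1})² |c_j|²`. -/
theorem trace_comm_diag_triK_sq (N : ℕ) (h : ℕ → ℝ) (c : ℕ → ℂ)
    (htraceless : ∑ j ∈ Finset.Icc 1 N, h j = 0)
    (h' : Matrix (Fin N) (Fin N) ℂ)
    (hh' : h' = Matrix.diagonal (fun i : Fin N => ((h ((i : ℕ) + 1) : ℝ) : ℂ) * Complex.I)) :
    Matrix.trace ((h' * triK c N - triK c N * h') * (h' * triK c N - triK c N * h')) =
      -2 * ∑ j ∈ Finset.Icc 1 (N - 1),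
        (((h j - h (j + 1)) ^ 2 * ‖c j‖ ^ 2 : ℝ) : ℂ) := by
  subst hh'
  set K : ℕ → ℕ → ℂ := fun a b =>
    if a + 1 = b then c (a + 1) else if b + 1 = a then -(starRingEnd ℂ) (c (b + 1)) else 0
    with hK
  set F : ℕ → ℕ → ℂ := fun a b =>
    ((h (a+1) : ℂ) * Complex.I * K a b - K a b * ((h (b+1) : ℂ) * Complex.I)) *
    ((h (b+1) : ℂ) * Complex.I * K b a - K b a * ((h (a+1) : ℂ) * Complex.I)) with hF
  have hLHS : Matrix.trace ((Matrix.diagonal (fun i : Fin N => ((h ((i : ℕ) + 1) : ℝ) : ℂ) * Complex.I) * triK c N - triK c N * Matrix.diagonal (fun i : Fin N => ((h ((i : ℕ) + 1) : ℝ) : ℂ) * Complex.I)) * (Matrix.diagonal (fun i : Fin N => ((h ((i : ℕ) + 1) : ℝ) : ℂ) * Complex.I) * triK c N - triK c N * Matrix.diagonal (fun i : Fin N => ((h ((i : ℕ) + 1) : ℝ) : ℂ) * Complex.I)))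
      = ∑ i : Fin N, ∑ j : Fin N, F (i : ℕ) (j : ℕ) := by
    have hA : (Matrix.diagonal (fun i : Fin N => ((h ((i : ℕ) + 1) : ℝ) : ℂ) * Complex.I) * triK c N - triK c N * Matrix.diagonal (fun i : Fin N => ((h ((i : ℕ) + 1) : ℝ) : ℂ) * Complex.I))
        = Matrix.of (fun i j : Fin N =>
            (h ((i:ℕ)+1) : ℂ) * Complex.I * K (i:ℕ) (j:ℕ) - K (i:ℕ) (j:ℕ) * ((h ((j:ℕ)+1) : ℂ) * Complex.I)) := by
      ext i j
      simp only [Matrix.sub_apply, Matrix.diagonal_mul, Matrix.mul_diagonal, Matrix.of_apply]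
      rfl
    rw [hA, Matrix.trace]
    simp only [Matrix.diag_apply, Matrix.mul_apply, Matrix.of_apply]
    rfl
  rw [hLHS]
  have hconv : ∑ i : Fin N, ∑ j : Fin N, F (i : ℕ) (j : ℕ)
      = ∑ a ∈ Finset.range N, ∑ b ∈ Finset.range N, F a b := by
    simp_rw [Fin.sum_univ_eq_sum_range]
    exact Fin.sum_univ_eq_sum_range (fun a => ∑ i ∈ Finset.range N, F a i) N
  rw [hconv, double_sum_tridiag N F (by
    intro a b h1 h2
    simp only [hF, hK, if_neg h1, if_neg h2, mul_zero, zero_mul, sub_zero, zero_sub])]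
  rw [show Finset.Icc 1 (N-1) = Finset.Ico 1 ((N-1)+1) from by rw [Finset.Ico_add_one_right_eq_Icc],
    Finset.sum_Ico_eq_sum_range, Finset.mul_sum]
  simp only [Nat.add_sub_cancel]
  refine Finset.sum_congr rfl fun a _ => ?_
  simp only [show 1 + a = a + 1 from by omega]
  have e1 : K a (a+1) = c (a+1) := by simp [hK]
  have e2 : K (a+1) a = -(starRingEnd ℂ) (c (a+1)) := by
    simp only [hK]
    rw [if_neg (by omega)]; simp
  have hz : ((‖c (a+1)‖ : ℝ) : ℂ)^2 = c (a+1) * (starRingEnd ℂ) (c (a+1)) := by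
    rw [← Complex.ofReal_pow, Complex.sq_norm, Complex.mul_conj]
  simp only [hF, e1, e2]
  push_cast
  rw [hz]
  linear_combination (2 * c (a+1) * ((starRingEnd ℂ) (c (a+1))) *
    ((h (a+1) : ℂ) - (h (a+1+1) : ℂ))^2) * Complex.I_sq
end

section
/- Given signs ε_j ∈ {+1,-1} and a > 0, suppose h' = diag(ih_1,...,ih_N) with h_j - h_{j+1} = ε_j a for all j. Set x = e^{-h'r} k e^{h'r}. Then Tr([x,k]²) = -8 sin²(ar)·(∑_{j=1}^{N-1}|c_j|⁴ + ∑_{j=1}^{N-2}|c_j|²|c_{j+1}|²·(1 - 3ε_jε_{j+1})/2). -/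
open Matrix Finset

lemma sum_eq_single_nat {N : ℕ} (f : Fin N → ℂ) (t : ℕ)
    (hf : ∀ l : Fin N, (l : ℕ) ≠ t → f l = 0) :
    ∑ l, f l = if h : t < N then f ⟨t, h⟩ else 0 := by
  split
  · next h =>
    refine Finset.sum_eq_single_of_mem ⟨t, h⟩ (Finset.mem_univ _) (fun l _ hl => hf l ?_)
    simpa [Fin.ext_iff] using hl
  · next h =>
    exact Finset.sum_eq_zero fun l _ => hf l (by have := l.isLt; omega)

lemma triK_apply_split (b : ℕ → ℂ) {N : ℕ} (i l : Fin N) :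
    triK b N i l = (if (i:ℕ)+1 = (l:ℕ) then b ((i:ℕ)+1) else 0)
      + (if (l:ℕ)+1 = (i:ℕ) then -(starRingEnd ℂ) (b ((l:ℕ)+1)) else 0) := by
  unfold triK; split_ifs <;> first | omega | ring1

lemma mul_triK_apply {N : ℕ} (b c : ℕ → ℂ) (i j : Fin N) :
    (triK b N * triK c N) i j =
      (if h : (i:ℕ)+1 < N then b ((i:ℕ)+1) * triK c N ⟨(i:ℕ)+1, h⟩ j else 0)
      + (if 1 ≤ (i:ℕ) then
          -(starRingEnd ℂ) (b (i:ℕ)) *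
            triK c N ⟨(i:ℕ)-1, lt_of_le_of_lt (Nat.sub_le _ _) i.isLt⟩ j else 0) := by
  rw [Matrix.mul_apply]
  have key : ∀ l : Fin N, triK b N i l * triK c N l j =
      (if (i:ℕ)+1 = (l:ℕ) then b ((i:ℕ)+1) * triK c N l j else 0)
      + (if (l:ℕ)+1 = (i:ℕ) then -(starRingEnd ℂ) (b ((l:ℕ)+1)) * triK c N l j else 0) := by
    intro l; simp [triK_apply_split, add_mul, ite_mul]
  rw [Finset.sum_congr rfl (fun l _ => key l), Finset.sum_add_distrib]
  congr 1
  · rw [sum_eq_single_nat _ ((i:ℕ)+1) (fun l hl => if_neg (fun hc => hl hc.symm))]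
    split
    · simp
    · rfl
  · by_cases hi : 1 ≤ (i:ℕ)
    · rw [sum_eq_single_nat _ ((i:ℕ)-1) (fun l hl => if_neg (by omega))]
      have h1 : (i:ℕ) - 1 < N := lt_of_le_of_lt (Nat.sub_le _ _) i.isLt
      rw [dif_pos h1, if_pos hi, if_pos (by omega : (i:ℕ)-1+1 = (i:ℕ)),
        show (i:ℕ)-1+1 = (i:ℕ) from by omega]
    · rw [if_neg hi]
      exact Finset.sum_eq_zero fun l _ => if_neg (by omega)

noncomputable def ddF (N : ℕ) (b c : ℕ → ℂ) (j : ℕ) : ℂ :=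
  if 1 ≤ j ∧ j + 1 ≤ N then (starRingEnd ℂ) (c j) * b j - c j * (starRingEnd ℂ) (b j) else 0

noncomputable def uF (b c : ℕ → ℂ) (p : ℕ) : ℂ := b (p+1) * c (p+2) - c (p+1) * b (p+2)

noncomputable def vF (b c : ℕ → ℂ) (p : ℕ) : ℂ :=
  (starRingEnd ℂ) (b (p+2)) * (starRingEnd ℂ) (c (p+1)) -
    (starRingEnd ℂ) (c (p+2)) * (starRingEnd ℂ) (b (p+1))

noncomputable def commM (N : ℕ) (b c : ℕ → ℂ) : Matrix (Fin N) (Fin N) ℂ := fun i j =>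
  if (i:ℕ) = (j:ℕ) then ddF N b c i - ddF N b c ((i:ℕ)+1)
  else if (i:ℕ) + 2 = (j:ℕ) then uF b c i
  else if (j:ℕ) + 2 = (i:ℕ) then vF b c j
  else 0

set_option maxHeartbeats 1000000 in
lemma comm_eq {N : ℕ} (b c : ℕ → ℂ) :
    triK b N * triK c N - triK c N * triK b N = commM N b c := by
  ext i j
  rw [Matrix.sub_apply, mul_triK_apply, mul_triK_apply]
  unfold commM ddF uF vF triK
  simp only [Fin.val_mk]
  split_ifs <;>
    first
      | omega
      | ring1
      | (rw [show ((j:ℕ)) = (i:ℕ) from by omega]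
         try rw [show ((i:ℕ))-1+1 = (i:ℕ) from by omega]
         try ring1)
      | (rw [show ((i:ℕ)) = (j:ℕ) from by omega]
         try rw [show ((j:ℕ))-1+1 = (j:ℕ) from by omega]
         try ring1)
      | (rw [show ((i:ℕ))-1+1 = (i:ℕ) from by omega]; try ring1)
      | (rw [show ((i:ℕ)) = (j:ℕ)+2 from by omega]; try ring1)
      | (rw [show ((j:ℕ)) = (i:ℕ)+2 from by omega]; try ring1)

lemma sum_range_cutoff (N : ℕ) (f : ℕ → ℂ) :
    ∑ n ∈ Finset.range N, (if n + 2 < N then f n else 0) = ∑ n ∈ Finset.range (N-2), f n := by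
  rw [← Finset.sum_subset (Finset.range_subset_range.2 (by omega : N-2 ≤ N))
      (fun x hx hnx => if_neg (by simp only [Finset.mem_range] at hx hnx; omega))]
  exact Finset.sum_congr rfl fun x hx => if_pos (by simp only [Finset.mem_range] at hx; omega)

set_option maxHeartbeats 1000000 in
lemma trace_commM {N : ℕ} (b c : ℕ → ℂ) :
    Matrix.trace (commM N b c * commM N b c) =
      (∑ i ∈ Finset.range N, (ddF N b c i - ddF N b c (i+1))^2)
      + 2 * ∑ p ∈ Finset.range (N-2), uF b c p * vF b c p := by
  have key : ∀ i j : Fin N, commM N b c i j * commM N b c j i =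
      (if (j:ℕ) = (i:ℕ) then (ddF N b c i - ddF N b c ((i:ℕ)+1))^2 else 0)
      + ((if (i:ℕ)+2 = (j:ℕ) then uF b c i * vF b c i else 0)
      + (if (j:ℕ)+2 = (i:ℕ) then uF b c (j:ℕ) * vF b c (j:ℕ) else 0)) := by
    intro i j
    unfold commM
    split_ifs <;>
      first
        | omega
        | ring1
        | (rw [show ((j:ℕ)) = (i:ℕ) from by omega]; try ring1)
        | (rw [show ((i:ℕ)) = (j:ℕ) from by omega]; try ring1)
  have tr : Matrix.trace (commM N b c * commM N b c)
      = ∑ i : Fin N, ∑ j : Fin N, commM N b c i j * commM N b c j i := by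
    simp [Matrix.trace, Matrix.diag, Matrix.mul_apply]
  rw [tr]
  have step1 : ∀ i : Fin N, ∑ j : Fin N, commM N b c i j * commM N b c j i
      = (ddF N b c (i:ℕ) - ddF N b c ((i:ℕ)+1))^2
        + ((if (i:ℕ)+2 < N then uF b c (i:ℕ) * vF b c (i:ℕ) else 0)
        + ∑ j : Fin N, (if (j:ℕ)+2 = (i:ℕ) then uF b c (j:ℕ) * vF b c (j:ℕ) else 0)) := by
    intro i
    rw [Finset.sum_congr rfl fun j _ => key i j, Finset.sum_add_distrib, Finset.sum_add_distrib]
    congr 1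
    · rw [sum_eq_single_nat _ (i:ℕ) (fun l hl => if_neg hl), dif_pos i.isLt]
      simp
    congr 1
    · rw [sum_eq_single_nat _ ((i:ℕ)+2) (fun l hl => if_neg (fun hc => hl hc.symm))]
      split
      · rw [if_pos rfl]
      · rfl
  rw [Finset.sum_congr rfl fun i _ => step1 i, Finset.sum_add_distrib, Finset.sum_add_distrib]
  have step2 : ∑ i : Fin N, ∑ j : Fin N, (if (j:ℕ)+2 = (i:ℕ) then uF b c (j:ℕ) * vF b c (j:ℕ) else 0)
      = ∑ j : Fin N, (if (j:ℕ)+2 < N then uF b c (j:ℕ) * vF b c (j:ℕ) else 0) := by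
    rw [Finset.sum_comm]
    refine Finset.sum_congr rfl fun j _ => ?_
    rw [sum_eq_single_nat _ ((j:ℕ)+2) (fun l hl => if_neg (fun hc => hl hc.symm))]
    split
    · rw [if_pos rfl]
    · rfl
  rw [step2]
  rw [Fin.sum_univ_eq_sum_range (fun n => (ddF N b c n - ddF N b c (n+1))^2),
    Fin.sum_univ_eq_sum_range (fun n => if n+2 < N then uF b c n * vF b c n else 0),
    sum_range_cutoff]
  ring

set_option maxHeartbeats 1600000 in
/-- For `h' = diag(ih₁,…,ih_N)` with `h_j - h_{j+1} = ε_j a` (`ε_j = ±1`, `a > 0`)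
and `x = e^{-h'r} k e^{h'r}`, one has
`Tr([x,k]²) = -8 sin²(ar)(∑ |c_j|⁴ + ∑ |c_j|²|c_{j+1}|²(1-3ε_jε_{j+1})/2)`. -/
theorem trace_comm_x_k_sq (N : ℕ) (hN : 2 ≤ N) (a r : ℝ) (ha : 0 < a)
    (h : ℕ → ℝ) (ε : ℕ → ℝ) (c : ℕ → ℂ)
    (hε : ∀ j ∈ Finset.Icc 1 (N - 1), ε j = 1 ∨ ε j = -1)
    (hdiff : ∀ j ∈ Finset.Icc 1 (N - 1), h j - h (j + 1) = ε j * a)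
    (h' x : Matrix (Fin N) (Fin N) ℂ)
    (hh' : h' = Matrix.diagonal (fun i : Fin N => ((h ((i : ℕ) + 1) : ℝ) : ℂ) * Complex.I))
    (hx : x = NormedSpace.exp (-(r : ℂ) • h') * triK c N * NormedSpace.exp ((r : ℂ) • h')) :
    Matrix.trace ((x * triK c N - triK c N * x) * (x * triK c N - triK c N * x)) =
      ((-8 * Real.sin (a * r) ^ 2 : ℝ) : ℂ) *
        ((∑ j ∈ Finset.Icc 1 (N - 1), ((‖c j‖ ^ 4 : ℝ) : ℂ)) +
          ∑ j ∈ Finset.Icc 1 (N - 2),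
            ((‖c j‖ ^ 2 * ‖c (j + 1)‖ ^ 2 *
              ((1 - 3 * ε j * ε (j + 1)) / 2) : ℝ) : ℂ)) := by
  obtain ⟨M, rfl⟩ : ∃ M : ℕ, N = M + 2 := ⟨N - 2, by omega⟩
  set b : ℕ → ℂ := fun j => c j * Complex.exp (-(((ε j * a * r : ℝ)) : ℂ) * Complex.I) with hb
  have hbj : ∀ j, b j = c j * Complex.exp (-(((ε j * a * r : ℝ)) : ℂ) * Complex.I) := fun _ => rfl
  -- x is tridiagonal with dressed superdiagonal b
  have hcomb : ∀ (z u w : ℂ), Complex.exp z * u * Complex.exp w = u * Complex.exp (z + w) := by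
    intro z u w; rw [Complex.exp_add]; ring
  have hxb : x = triK b (M + 2) := by
    subst hh' hx
    rw [← Matrix.diagonal_smul, ← Matrix.diagonal_smul, Matrix.exp_diagonal, Matrix.exp_diagonal]
    ext i j
    rw [Matrix.mul_diagonal, Matrix.diagonal_mul]
    simp only [Pi.coe_exp, Pi.smul_apply, smul_eq_mul, ← Complex.exp_eq_exp_ℂ]
    unfold triK
    split_ifs with h1 h2
    · have hd := hdiff ((i : ℕ) + 1) (Finset.mem_Icc.2 ⟨by omega, by have := j.isLt; omega⟩)
      have hd' : ((h ((i:ℕ)+1) : ℂ)) - ((h ((i:ℕ)+1+1) : ℝ) : ℂ) = ((ε ((i:ℕ)+1) : ℝ) : ℂ) * a := by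
        exact_mod_cast hd
      rw [← h1, hcomb]
      have harg : -(r:ℂ) * (((h ((i:ℕ)+1) : ℝ):ℂ) * Complex.I)
          + (r:ℂ) * (((h ((i:ℕ)+1+1) : ℝ):ℂ) * Complex.I)
          = -(((ε ((i:ℕ)+1) * a * r : ℝ)):ℂ) * Complex.I := by
        push_cast
        linear_combination (-(r:ℂ) * Complex.I) * hd'
      rw [harg]
    · have hd := hdiff ((j : ℕ) + 1) (Finset.mem_Icc.2 ⟨by omega, by have := i.isLt; omega⟩)
      have hd' : ((h ((j:ℕ)+1) : ℂ)) - ((h ((j:ℕ)+1+1) : ℝ) : ℂ) = ((ε ((j:ℕ)+1) : ℝ) : ℂ) * a := by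
        exact_mod_cast hd
      have hconj : (starRingEnd ℂ) (Complex.exp (-((ε ((j:ℕ)+1) * a * r : ℝ) : ℂ) * Complex.I)) =
          Complex.exp (((ε ((j:ℕ)+1) * a * r : ℝ) : ℂ) * Complex.I) := by
        rw [← Complex.exp_conj]; congr 1; simp
      rw [← h2, hcomb]
      have harg : -(r:ℂ) * (((h ((j:ℕ)+1+1) : ℝ):ℂ) * Complex.I)
          + (r:ℂ) * (((h ((j:ℕ)+1) : ℝ):ℂ) * Complex.I)
          = (((ε ((j:ℕ)+1) * a * r : ℝ)):ℂ) * Complex.I := by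
        push_cast
        linear_combination ((r:ℂ) * Complex.I) * hd'
      rw [harg, hbj]
      simp only [_root_.map_mul, hconj]
      ring1
    · simp
  rw [hxb, comm_eq, trace_commM]
  -- basic scalar helpers
  have hexpP : ∀ t : ℝ, Complex.exp ((t:ℂ) * Complex.I)
      = ((Real.cos t : ℝ) : ℂ) + ((Real.sin t : ℝ) : ℂ) * Complex.I := by
    intro t
    rw [Complex.exp_mul_I, Complex.ofReal_cos, Complex.ofReal_sin]
  have hexpN : ∀ t : ℝ, Complex.exp (-(t:ℂ) * Complex.I)
      = ((Real.cos t : ℝ) : ℂ) - ((Real.sin t : ℝ) : ℂ) * Complex.I := by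
    intro t
    rw [show -(t:ℂ) * Complex.I = ((-t : ℝ) : ℂ) * Complex.I by push_cast; ring, hexpP,
      Real.cos_neg, Real.sin_neg]
    push_cast
    ring
  have hconjexp : ∀ t : ℝ, (starRingEnd ℂ) (Complex.exp (-(t:ℂ) * Complex.I))
      = Complex.exp ((t:ℂ) * Complex.I) := by
    intro t; rw [← Complex.exp_conj]; congr 1; simp
  have hmc : ∀ z : ℂ, z * (starRingEnd ℂ) z = (((‖z‖)^2 : ℝ) : ℂ) := by
    intro z; rw [Complex.sq_norm]; exact Complex.mul_conj z
  have hsin : ∀ j, 1 ≤ j → j ≤ M + 1 → Real.sin (ε j * a * r) = ε j * Real.sin (a * r) := by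
    intro j hj1 hj2
    rcases hε j (Finset.mem_Icc.2 ⟨hj1, by omega⟩) with hh | hh <;>
      simp [hh, neg_mul, one_mul, neg_one_mul, Real.sin_neg, mul_assoc]
  have hcos : ∀ j, 1 ≤ j → j ≤ M + 1 → Real.cos (ε j * a * r) = Real.cos (a * r) := by
    intro j hj1 hj2
    rcases hε j (Finset.mem_Icc.2 ⟨hj1, by omega⟩) with hh | hh <;>
      simp [hh, neg_mul, one_mul, neg_one_mul, Real.cos_neg, mul_assoc]
  have hε2 : ∀ j, 1 ≤ j → j ≤ M + 1 → ((ε j : ℝ) : ℂ)^2 = 1 := by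
    intro j hj1 hj2
    rcases hε j (Finset.mem_Icc.2 ⟨hj1, by omega⟩) with hh | hh <;> rw [hh] <;> norm_num
  -- closed form of the diagonal data
  have hdd : ∀ j, 1 ≤ j → j ≤ M + 1 → ddF (M+2) b c j
      = ((-2 * (ε j * Real.sin (a * r)) * ‖c j‖ ^ 2 : ℝ) : ℂ) * Complex.I := by
    intro j hj1 hj2
    unfold ddF
    rw [if_pos ⟨hj1, by omega⟩, hbj, _root_.map_mul, hconjexp, hexpP, hexpN,
      hsin j hj1 hj2, hcos j hj1 hj2]
    linear_combination (norm := (push_cast; ring1))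
      ((-2 : ℂ) * ((ε j : ℝ) : ℂ) * ((Real.sin (a*r) : ℝ) : ℂ) * Complex.I) * hmc (c j)
  have hdd0 : ddF (M+2) b c 0 = 0 := by unfold ddF; rw [if_neg (by omega)]
  have hddN : ddF (M+2) b c (M+2) = 0 := by unfold ddF; rw [if_neg (by omega)]
  -- expand the sum of squared diagonal differences
  have expand : ∑ i ∈ Finset.range (M+2), (ddF (M+2) b c i - ddF (M+2) b c (i+1))^2
      = 2 * (∑ i ∈ Finset.range (M+1), ddF (M+2) b c (i+1)^2)
        - 2 * ∑ i ∈ Finset.range M, ddF (M+2) b c (i+1) * ddF (M+2) b c (i+2) := by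
    rw [Finset.sum_congr rfl (fun i _ => by ring :
      ∀ i ∈ Finset.range (M+2), (ddF (M+2) b c i - ddF (M+2) b c (i+1))^2
        = ddF (M+2) b c i^2 + ddF (M+2) b c (i+1)^2 - 2*(ddF (M+2) b c i * ddF (M+2) b c (i+1)))]
    rw [Finset.sum_sub_distrib, Finset.sum_add_distrib, ← Finset.mul_sum]
    rw [Finset.sum_range_succ' (fun i => ddF (M+2) b c i ^ 2) (M+1)]
    rw [Finset.sum_range_succ (fun i => ddF (M+2) b c (i+1) ^ 2) (M+1)]
    rw [Finset.sum_range_succ' (fun i => ddF (M+2) b c i * ddF (M+2) b c (i+1)) (M+1)]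
    rw [Finset.sum_range_succ (fun i => ddF (M+2) b c (i+1) * ddF (M+2) b c (i+1+1)) M]
    rw [hdd0, hddN]
    ring
  -- pointwise evaluations
  have hA : ∀ i ∈ Finset.range (M+1), ddF (M+2) b c (i+1)^2
      = ((-4 * Real.sin (a*r)^2 * ‖c (i+1)‖^4 : ℝ) : ℂ) := by
    intro i hi
    rw [Finset.mem_range] at hi
    rw [hdd (i+1) (by omega) (by omega)]
    rw [mul_pow, Complex.I_sq]
    linear_combination (norm := (push_cast; ring1))
      ((-4:ℂ) * ((Real.sin (a*r) : ℝ):ℂ)^2 * ((‖c (i+1)‖ : ℝ):ℂ)^4)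
        * hε2 (i+1) (by omega) (by omega)
  have hB : ∀ i ∈ Finset.range M, ddF (M+2) b c (i+1) * ddF (M+2) b c (i+2)
      = ((-4 * Real.sin (a*r)^2 * (ε (i+1) * ε (i+2))
          * (‖c (i+1)‖^2 * ‖c (i+2)‖^2) : ℝ) : ℂ) := by
    intro i hi
    rw [Finset.mem_range] at hi
    rw [hdd (i+1) (by omega) (by omega), hdd (i+2) (by omega) (by omega)]
    have : ∀ z w : ℂ, (z * Complex.I) * (w * Complex.I) = z * w * Complex.I^2 := by
      intro z w; ring
    rw [this, Complex.I_sq]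
    push_cast
    ring1
  have hC : ∀ i ∈ Finset.range M, uF b c i * vF b c i
      = ((-2 * Real.sin (a*r)^2 * (1 - ε (i+1) * ε (i+2))
          * (‖c (i+1)‖^2 * ‖c (i+2)‖^2) : ℝ) : ℂ) := by
    intro i hi
    rw [Finset.mem_range] at hi
    unfold uF vF
    rw [hbj, hbj, _root_.map_mul, _root_.map_mul, hconjexp, hconjexp,
      hexpN, hexpN, hexpP, hexpP,
      hsin (i+1) (by omega) (by omega), hsin (i+2) (by omega) (by omega),
      hcos (i+1) (by omega) (by omega), hcos (i+2) (by omega) (by omega)]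
    linear_combination (norm := (push_cast; ring1))
      (c (i+2) * (starRingEnd ℂ) (c (i+2)) * ((Real.sin (a*r) : ℝ):ℂ)^2
          * (((ε (i+2) : ℝ):ℂ) - ((ε (i+1) : ℝ):ℂ))^2 * Complex.I^2) * hmc (c (i+1))
      + (((‖c (i+1)‖ : ℝ):ℂ)^2 * ((Real.sin (a*r) : ℝ):ℂ)^2
          * (((ε (i+2) : ℝ):ℂ) - ((ε (i+1) : ℝ):ℂ))^2 * Complex.I^2) * hmc (c (i+2))
      + (((‖c (i+1)‖ : ℝ):ℂ)^2 * ((‖c (i+2)‖ : ℝ):ℂ)^2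
          * ((Real.sin (a*r) : ℝ):ℂ)^2
          * (((ε (i+2) : ℝ):ℂ) - ((ε (i+1) : ℝ):ℂ))^2) * Complex.I_sq
      - (((‖c (i+1)‖ : ℝ):ℂ)^2 * ((‖c (i+2)‖ : ℝ):ℂ)^2
          * ((Real.sin (a*r) : ℝ):ℂ)^2) * hε2 (i+1) (by omega) (by omega)
      - (((‖c (i+1)‖ : ℝ):ℂ)^2 * ((‖c (i+2)‖ : ℝ):ℂ)^2
          * ((Real.sin (a*r) : ℝ):ℂ)^2) * hε2 (i+2) (by omega) (by omega)
  rw [show M+2-2 = M from by omega, show M+2-1 = M+1 from by omega, expand,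
    Finset.sum_congr rfl hA, Finset.sum_congr rfl hB, Finset.sum_congr rfl hC,
    ← Finset.Ico_add_one_right_eq_Icc, ← Finset.Ico_add_one_right_eq_Icc,
    Finset.sum_Ico_eq_sum_range, Finset.sum_Ico_eq_sum_range,
    show M+1+1-1 = M+1 from by omega, show M+1-1 = M from by omega]
  have EA : (2:ℂ) * ∑ i ∈ Finset.range (M+1),
        ((-4 * Real.sin (a*r)^2 * ‖c (i+1)‖^4 : ℝ) : ℂ)
      = ((-8 * Real.sin (a * r) ^ 2 : ℝ) : ℂ) * ∑ i ∈ Finset.range (M+1),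
        ((‖c (1+i)‖ ^ 4 : ℝ) : ℂ) := by
    rw [Finset.mul_sum, Finset.mul_sum]
    refine Finset.sum_congr rfl fun i hi => ?_
    rw [show 1+i = i+1 from Nat.add_comm 1 i]
    push_cast
    ring
  have EB : (2:ℂ) * (∑ i ∈ Finset.range M,
        ((-2 * Real.sin (a*r)^2 * (1 - ε (i+1) * ε (i+2))
          * (‖c (i+1)‖^2 * ‖c (i+2)‖^2) : ℝ) : ℂ))
      - 2 * ∑ i ∈ Finset.range M,
        ((-4 * Real.sin (a*r)^2 * (ε (i+1) * ε (i+2))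
          * (‖c (i+1)‖^2 * ‖c (i+2)‖^2) : ℝ) : ℂ)
      = ((-8 * Real.sin (a * r) ^ 2 : ℝ) : ℂ) * ∑ i ∈ Finset.range M,
        ((‖c (1+i)‖ ^ 2 * ‖c (1+i+1)‖ ^ 2 *
              ((1 - 3 * ε (1+i) * ε (1+i+1)) / 2) : ℝ) : ℂ) := by
    rw [Finset.mul_sum, Finset.mul_sum, Finset.mul_sum, ← Finset.sum_sub_distrib]
    refine Finset.sum_congr rfl fun i hi => ?_
    rw [show 1+i = i+1 from Nat.add_comm 1 i, show i+1+1 = i+2 from by omega]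
    push_cast
    ring
  rw [mul_add]
  linear_combination EA + EB
end

section
/- If a 4×4 complex matrix k satisfies k⁴ = -(p²+q²)k² - p²q²·I with p > q > 0, then e^{xk} = f_0(x)I + f_1(x)k + f_2(x)k² + f_3(x)k³, where f_0(x) = (p²cos(qx) - q²cos(px))/(p²-q²), f_1(x) = (p²sin(qx)/q - q²sin(px)/p)/(p²-q²), f_2(x) = (cos(qx)-cos(px))/(p²-q²), f_3(x) = (sin(qx)/q - sin(px)/p)/(p²-q²). -/
open Matrix

attribute [local instance] Matrix.linftyOpNormedAddCommGroup Matrix.linftyOpNormedRing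
  Matrix.linftyOpNormedAlgebra

/-- If a 4×4 complex matrix satisfies `k⁴ = -(p²+q²)k² - p²q²·I` with
`p > q > 0`, then `e^{xk} = f₀(x)I + f₁(x)k + f₂(x)k² + f₃(x)k³` with the
explicit trigonometric coefficients. -/
theorem exp_su4_k (p q : ℝ) (hq : 0 < q) (hpq : q < p)
    (k : Matrix (Fin 4) (Fin 4) ℂ)
    (hk : k ^ 4 = -(((p ^ 2 + q ^ 2 : ℝ) : ℂ)) • k ^ 2 - ((p ^ 2 * q ^ 2 : ℝ) : ℂ) • 1) :
    ∀ x : ℝ, NormedSpace.exp ((x : ℂ) • k) =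
      (((p ^ 2 * Real.cos (q * x) - q ^ 2 * Real.cos (p * x)) / (p ^ 2 - q ^ 2) : ℝ) : ℂ) • 1 +
      (((p ^ 2 * Real.sin (q * x) / q - q ^ 2 * Real.sin (p * x) / p) / (p ^ 2 - q ^ 2) : ℝ) : ℂ) • k +
      (((Real.cos (q * x) - Real.cos (p * x)) / (p ^ 2 - q ^ 2) : ℝ) : ℂ) • k ^ 2 +
      (((Real.sin (q * x) / q - Real.sin (p * x) / p) / (p ^ 2 - q ^ 2) : ℝ) : ℂ) • k ^ 3 := by
  have hp : 0 < p := hq.trans hpq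
  have hd : p ^ 2 - q ^ 2 ≠ 0 := by nlinarith
  have hq' : q ≠ 0 := ne_of_gt hq
  have hp' : p ≠ 0 := ne_of_gt hp
  -- coefficient functions
  set c0 : ℝ → ℝ := fun t => (p ^ 2 * Real.cos (q * t) - q ^ 2 * Real.cos (p * t)) / (p ^ 2 - q ^ 2) with hc0
  set c1 : ℝ → ℝ := fun t => (p ^ 2 * Real.sin (q * t) / q - q ^ 2 * Real.sin (p * t) / p) / (p ^ 2 - q ^ 2) with hc1
  set c2 : ℝ → ℝ := fun t => (Real.cos (q * t) - Real.cos (p * t)) / (p ^ 2 - q ^ 2) with hc2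
  set c3 : ℝ → ℝ := fun t => (Real.sin (q * t) / q - Real.sin (p * t) / p) / (p ^ 2 - q ^ 2) with hc3
  set F : ℝ → Matrix (Fin 4) (Fin 4) ℂ := fun t =>
    ((c0 t : ℝ) : ℂ) • 1 + ((c1 t : ℝ) : ℂ) • k + ((c2 t : ℝ) : ℂ) • k ^ 2 +
      ((c3 t : ℝ) : ℂ) • k ^ 3 with hF
  -- basic derivative building blocks
  have hcos : ∀ (a t : ℝ), HasDerivAt (fun s => Real.cos (a * s)) (-(a * Real.sin (a * t))) t := by
    intro a t
    have h := ((hasDerivAt_id t).const_mul a).cos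
    simpa [mul_comm] using h
  have hsin : ∀ (a t : ℝ), HasDerivAt (fun s => Real.sin (a * s)) (a * Real.cos (a * t)) t := by
    intro a t
    have h := ((hasDerivAt_id t).const_mul a).sin
    simpa [mul_comm] using h
  -- derivatives of the coefficient functions
  have h0 : ∀ t, HasDerivAt c0 (-(p ^ 2 * q ^ 2) * c3 t) t := by
    intro t
    have h := (((hcos q t).const_mul (p ^ 2)).sub ((hcos p t).const_mul (q ^ 2))).div_const
      (p ^ 2 - q ^ 2)
    refine h.congr_deriv (Eq.symm ?_)
    simp only [hc0, hc1, hc2, hc3]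
    rw [eq_div_iff hd]
    field_simp
    try ring
  have h1 : ∀ t, HasDerivAt c1 (c0 t) t := by
    intro t
    have h := ((((hsin q t).const_mul (p ^ 2)).div_const q).sub
      (((hsin p t).const_mul (q ^ 2)).div_const p)).div_const (p ^ 2 - q ^ 2)
    refine h.congr_deriv (Eq.symm ?_)
    simp only [hc0, hc1, hc2, hc3]
    rw [eq_div_iff hd]
    field_simp
    try ring
  have h2 : ∀ t, HasDerivAt c2 (c1 t - (p ^ 2 + q ^ 2) * c3 t) t := by
    intro t
    have h := ((hcos q t).sub (hcos p t)).div_const (p ^ 2 - q ^ 2)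
    refine h.congr_deriv (Eq.symm ?_)
    simp only [hc0, hc1, hc2, hc3]
    rw [eq_div_iff hd]
    field_simp
    try ring
  have h3 : ∀ t, HasDerivAt c3 (c2 t) t := by
    intro t
    have h := (((hsin q t).div_const q).sub ((hsin p t).div_const p)).div_const (p ^ 2 - q ^ 2)
    refine h.congr_deriv (Eq.symm ?_)
    simp only [hc0, hc1, hc2, hc3]
    rw [eq_div_iff hd]
    field_simp
    try ring
  -- derivative of F
  have hF' : ∀ t, HasDerivAt F (F t * k) t := by
    intro t
    have h := ((((h0 t).ofReal_comp.smul_const (1 : Matrix (Fin 4) (Fin 4) ℂ)).add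
      ((h1 t).ofReal_comp.smul_const k)).add
      ((h2 t).ofReal_comp.smul_const (k ^ 2))).add
      ((h3 t).ofReal_comp.smul_const (k ^ 3))
    refine h.congr_deriv (Eq.symm ?_)
    rw [hF]
    simp only [add_mul, smul_mul_assoc, one_mul]
    rw [show k * k = k ^ 2 from (sq k).symm, show k ^ 2 * k = k ^ 3 from (pow_succ k 2).symm,
      show k ^ 3 * k = k ^ 4 from (pow_succ k 3).symm, hk]
    push_cast
    match_scalars <;> ring
  -- derivative of exponentials
  have hEneg : ∀ t : ℝ, HasDerivAt (fun s : ℝ => NormedSpace.exp ((s : ℂ) • (-k)))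
      ((-k) * NormedSpace.exp ((t : ℂ) • (-k))) t := by
    intro t
    have h1 : HasDerivAt (fun u : ℂ => NormedSpace.exp (u • (-k)))
        ((-k) * NormedSpace.exp ((t : ℂ) • (-k))) (t : ℂ) :=
      hasDerivAt_exp_smul_const' (-k) (t : ℂ)
    have h2 := (h1.hasFDerivAt.restrictScalars ℝ).comp t Complex.ofRealCLM.hasFDerivAt
    refine h2.hasDerivAt.congr_deriv (Eq.symm ?_)
    simp
    exact (one_smul ℂ _).symm
  set G : ℝ → Matrix (Fin 4) (Fin 4) ℂ := fun t => F t * NormedSpace.exp ((t : ℂ) • (-k)) with hG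
  have hG' : ∀ t, HasDerivAt G 0 t := by
    intro t
    have h := (hF' t).mul (hEneg t)
    refine h.congr_deriv (Eq.symm ?_)
    rw [neg_mul, mul_neg, ← mul_assoc, add_neg_cancel]
  have hconst : ∀ t, G t = G 0 := by
    intro t
    exact is_const_of_deriv_eq_zero (fun s => (hG' s).differentiableAt)
      (fun s => (hG' s).deriv) t 0
  have hG0 : G 0 = 1 := by
    rw [hG]
    have hdC : ((p : ℂ) ^ 2 - (q : ℂ) ^ 2) ≠ 0 := by
      intro h; apply hd; exact_mod_cast h
    simp [hc0, hc1, hc2, hc3, hF, NormedSpace.exp_zero]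
    rw [div_self hdC, one_smul]
  intro x
  have hcomm : Commute ((x : ℂ) • k) ((x : ℂ) • (-k)) := by
    apply Commute.smul_left
    apply Commute.smul_right
    simp [Commute, SemiconjBy, mul_neg, neg_mul]
  have hinv : NormedSpace.exp ((x : ℂ) • (-k)) * NormedSpace.exp ((x : ℂ) • k) = 1 := by
    refine (NormedSpace.exp_add_of_commute hcomm.symm).symm.trans ?_
    simp [← smul_add, NormedSpace.exp_zero]
  have hFx : F x * NormedSpace.exp ((x : ℂ) • (-k)) = 1 := (hconst x).trans hG0
  have : NormedSpace.exp ((x : ℂ) • k) = F x := by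
    calc NormedSpace.exp ((x : ℂ) • k)
        = 1 * NormedSpace.exp ((x : ℂ) • k) := (one_mul _).symm
      _ = F x * (NormedSpace.exp ((x : ℂ) • (-k)) * NormedSpace.exp ((x : ℂ) • k)) := by
          rw [← mul_assoc, hFx]
      _ = F x := by rw [hinv, mul_one]
  rw [this, hF]
end

section
/- For positive reals A, B, C, M, α, β, D, the function g(x,y,z) = D·(A²x + B²y + C²xy + z(1 + α²x + β²y))/√(xyz) of positive variables x, y, z (corresponding to g(L_φ,L_r,L_γ) with x = 1/L_φ², y = 1/L_r², z = M²/L_γ²) has a unique stationary point in the positive octant at x = B/(αC), y = A/(βC), z = AB/(αβ). -/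
lemma slice_deriv (D c q w v : ℝ) (hD : 0 < D) (hw : 0 < w) (hv : 0 < v)
    (f : ℝ → ℝ) (hf : ∀ t, f t = D * (c * t + q) / Real.sqrt (t * w)) :
    (HasDerivAt f 0 v ↔ c * v = q) := by
  have hvw : 0 < v * w := by positivity
  set s := Real.sqrt (v * w) with hsdef
  have hs : 0 < s := Real.sqrt_pos.mpr hvw
  have hs2 : s ^ 2 = v * w := Real.sq_sqrt hvw.le
  have hnum : HasDerivAt (fun t => D * (c * t + q)) (D * c) v := by
    simpa using (((hasDerivAt_id v).const_mul c).add_const q).const_mul D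
  have hden : HasDerivAt (fun t => Real.sqrt (t * w)) (1 / (2 * s) * w) v := by
    have h1 : HasDerivAt (fun t : ℝ => t * w) w v := by
      simpa using (hasDerivAt_id v).mul_const w
    have h2 := (Real.hasDerivAt_sqrt hvw.ne').comp v h1
    simpa [hsdef, Function.comp_def] using h2
  have hder : HasDerivAt f ((D * c * s - D * (c * v + q) * (1 / (2 * s) * w)) / s ^ 2) v := by
    have hfe : f = fun t => D * (c * t + q) / Real.sqrt (t * w) := funext hf
    rw [hfe]
    exact hnum.div hden hs.ne'
  constructor
  · intro h0
    have hEq : (0 : ℝ) = (D * c * s - D * (c * v + q) * (1 / (2 * s) * w)) / s ^ 2 :=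
      h0.unique hder
    have hnum0 : D * c * s - D * (c * v + q) * (1 / (2 * s) * w) = 0 := by
      have := hEq.symm
      rcases div_eq_zero_iff.mp this with h | h
      · exact h
      · exact absurd h (by positivity)
    have h1 : D * c * s * (2 * s) = D * (c * v + q) * w := by
      field_simp at hnum0
      linarith [hnum0]
    have h2 : 2 * c * v * (D * w) = (c * v + q) * (D * w) := by
      have : D * c * (2 * (v * w)) = D * (c * v + q) * w := by
        calc D * c * (2 * (v * w)) = D * c * s * (2 * s) := by rw [← hs2]; ring
        _ = D * (c * v + q) * w := h1
      linarith [this]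
    have hDw : (D * w) ≠ 0 := by positivity
    have := mul_right_cancel₀ hDw h2
    linarith
  · intro hq
    have hval : (D * c * s - D * (c * v + q) * (1 / (2 * s) * w)) / s ^ 2 = 0 := by
      rw [div_eq_zero_iff]
      left
      rw [← hq]
      field_simp
      linear_combination (2 * D * c) * hs2
    rw [← hval]
    exact hder

/-- For positive constants `A, B, C, M, α, β, D`, the function
`g(x,y,z) = D(A²x + B²y + C²xy + z(1 + α²x + β²y))/√(xyz)` of positive
variables has a unique stationary point in the positive octant, located at
`x = B/(αC)`, `y = A/(βC)`, `z = AB/(αβ)`. -/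
theorem unique_stationary_point (A B C M α β D : ℝ)
    (hA : 0 < A) (hB : 0 < B) (hC : 0 < C) (hM : 0 < M)
    (hα : 0 < α) (hβ : 0 < β) (hD : 0 < D)
    (g : ℝ → ℝ → ℝ → ℝ)
    (hg : ∀ x y z, g x y z =
      D * (A ^ 2 * x + B ^ 2 * y + C ^ 2 * x * y + z * (1 + α ^ 2 * x + β ^ 2 * y)) /
        Real.sqrt (x * y * z)) :
    ∀ x y z : ℝ, 0 < x → 0 < y → 0 < z →
      ((HasDerivAt (fun t => g t y z) 0 x ∧
        HasDerivAt (fun t => g x t z) 0 y ∧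
        HasDerivAt (fun t => g x y t) 0 z) ↔
      (x = B / (α * C) ∧ y = A / (β * C) ∧ z = A * B / (α * β))) := by
  intro x y z hx hy hz
  have i1 : HasDerivAt (fun t => g t y z) 0 x ↔
      (A ^ 2 + C ^ 2 * y + α ^ 2 * z) * x = B ^ 2 * y + z * (1 + β ^ 2 * y) := by
    apply slice_deriv D _ _ (y * z) x hD (by positivity) hx
    intro t
    rw [hg, show t * y * z = t * (y * z) by ring]
    congr 1
    ring
  have i2 : HasDerivAt (fun t => g x t z) 0 y ↔
      (B ^ 2 + C ^ 2 * x + β ^ 2 * z) * y = A ^ 2 * x + z * (1 + α ^ 2 * x) := by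
    apply slice_deriv D _ _ (x * z) y hD (by positivity) hy
    intro t
    rw [hg, show x * t * z = t * (x * z) by ring]
    congr 1
    ring
  have i3 : HasDerivAt (fun t => g x y t) 0 z ↔
      (1 + α ^ 2 * x + β ^ 2 * y) * z = A ^ 2 * x + B ^ 2 * y + C ^ 2 * x * y := by
    apply slice_deriv D _ _ (x * y) z hD (by positivity) hz
    intro t
    rw [hg, show x * y * t = t * (x * y) by ring]
    congr 1
    ring
  rw [i1, i2, i3]
  constructor
  · rintro ⟨e1, e2, e3⟩
    have hzxy : z = C ^ 2 * x * y := by linear_combination (-e1 - e2) / 2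
    have h4 : α ^ 2 * x * z = B ^ 2 * y := by linear_combination (e1 + e3) / 2
    have h5 : β ^ 2 * y * z = A ^ 2 * x := by linear_combination (e2 + e3) / 2
    have hx2 : (α * C * x - B) * (α * C * x + B) * y = 0 := by
      linear_combination h4 - α ^ 2 * x * hzxy
    have hy2 : (β * C * y - A) * (β * C * y + A) * x = 0 := by
      linear_combination h5 - β ^ 2 * y * hzxy
    have hxv : α * C * x = B := by
      rcases mul_eq_zero.mp hx2 with h | h
      · rcases mul_eq_zero.mp h with h' | h'
        · linarith [sub_eq_zero.mp h']
        · have : 0 < α * C * x := by positivity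
          linarith
      · exact absurd h hy.ne'
    have hyv : β * C * y = A := by
      rcases mul_eq_zero.mp hy2 with h | h
      · rcases mul_eq_zero.mp h with h' | h'
        · linarith [sub_eq_zero.mp h']
        · have : 0 < β * C * y := by positivity
          linarith
      · exact absurd h hx.ne'
    have hxe : x = B / (α * C) := by field_simp; linarith [hxv]
    have hye : y = A / (β * C) := by field_simp; linarith [hyv]
    refine ⟨hxe, hye, ?_⟩
    rw [hzxy, hxe, hye]
    field_simp
  · rintro ⟨hxe, hye, hze⟩
    subst hxe hye hze
    refine ⟨?_, ?_, ?_⟩ <;> field_simp <;> ring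
end
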